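/- Let n, m ≥ 1, let Ω ⊆ ℝᵐ be a bounded open set, let K ⊆ ℝⁿ be a compact set, let T₀ > 0 and l > 0. Let h : ℝⁿ × ℝ → ℝ, k : ℝⁿ × ℝᵐ × ℝ → ℝ and ū : ℝᵐ × ℝ → ℝ be continuous functions with k ≥ 0 and ū ≥ 0, and suppose that for every (x,t) ∈ K × [0, T₀] one has h(x,t) > ∫_Ω k(x,y,t)·ū(y,t)^l dy. Then there exists ε > 0 such that for every (x,t) ∈ K × [0, T₀] one has h(x,t) ≥ ∫_Ω k(x,y,t)·(ū(y,t) + ε)^l dy. -/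

import Mathlib

open MeasureTheory

private lemma cont_param {X : Type*} [TopologicalSpace X] [FirstCountableTopology X]
    [LocallyCompactSpace X] {m : ℕ} {s : Set (EuclideanSpace ℝ (Fin m))}
    (hsb : Bornology.IsBounded s)
    {f : X → EuclideanSpace ℝ (Fin m) → ℝ} (hf : Continuous f.uncurry) :
    Continuous (fun x => ∫ y in s, f x y) := by
  rw [continuous_iff_continuousAt]
  intro x₀
  rcases exists_compact_mem_nhds x₀ with ⟨U, U_cpct, U_nhds⟩
  have hcs : IsCompact (closure s) := hsb.isCompact_closure
  rcases (U_cpct.prod hcs).bddAbove_image hf.norm.continuousOn with ⟨M, hM⟩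
  apply continuousAt_of_dominated (bound := fun _ => M)
  · filter_upwards with x using Continuous.aestronglyMeasurable (by fun_prop)
  · filter_upwards [U_nhds] with x x_in
    rw [ae_restrict_iff]
    · filter_upwards with t t_in using
        hM (Set.mem_image_of_mem _ <| Set.mk_mem_prod x_in (subset_closure t_in))
    · exact (isClosed_le (by fun_prop) (by fun_prop)).measurableSet
  · exact integrableOn_const hsb.measure_lt_top.ne
  · filter_upwards using (by fun_prop)

/-- Key step of Lemma 3.7: if `h(x,t)` strictly exceeds the nonlocal boundary term
`∫_Ω k(x,y,t) ū^l(y,t) dy` on the compact set `K × [0,T₀]`, then for a suitably small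
`ε > 0` the shifted function `ū + ε` still satisfies the boundary supersolution
inequality. -/
theorem strict_supersolution_shift (n m : ℕ) (hn : 1 ≤ n) (hm : 1 ≤ m)
    (Ω : Set (EuclideanSpace ℝ (Fin m))) (hΩo : IsOpen Ω)
    (hΩb : Bornology.IsBounded Ω)
    (K : Set (EuclideanSpace ℝ (Fin n))) (hK : IsCompact K)
    (T₀ l : ℝ) (hT₀ : 0 < T₀) (hl : 0 < l)
    (h : EuclideanSpace ℝ (Fin n) → ℝ → ℝ)
    (k : EuclideanSpace ℝ (Fin n) → EuclideanSpace ℝ (Fin m) → ℝ → ℝ)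
    (ubar : EuclideanSpace ℝ (Fin m) → ℝ → ℝ)
    (hh : Continuous fun q : EuclideanSpace ℝ (Fin n) × ℝ => h q.1 q.2)
    (hk : Continuous fun q : EuclideanSpace ℝ (Fin n) × EuclideanSpace ℝ (Fin m) × ℝ =>
      k q.1 q.2.1 q.2.2)
    (hu : Continuous fun q : EuclideanSpace ℝ (Fin m) × ℝ => ubar q.1 q.2)
    (hknn : ∀ x y t, 0 ≤ k x y t) (hunn : ∀ y t, 0 ≤ ubar y t)
    (hstrict : ∀ x ∈ K, ∀ t ∈ Set.Icc (0 : ℝ) T₀,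
      (∫ y in Ω, k x y t * ubar y t ^ l) < h x t) :
    ∃ ε > (0 : ℝ), ∀ x ∈ K, ∀ t ∈ Set.Icc (0 : ℝ) T₀,
      (∫ y in Ω, k x y t * (ubar y t + ε) ^ l) ≤ h x t := by
  -- continuity of `z ↦ z ^ l`
  have hrpow : Continuous fun z : ℝ => z ^ l := by
    rw [continuous_iff_continuousAt]
    exact fun z => Real.continuousAt_rpow_const z l (Or.inr hl.le)
  -- the parametric integral, as a function of ((x, t), ε)
  set G : (EuclideanSpace ℝ (Fin n) × ℝ) × ℝ → ℝ :=
    fun q => ∫ y in Ω, k q.1.1 y q.1.2 * (ubar y q.1.2 + q.2) ^ l with hG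
  have hGc : Continuous G := by
    apply cont_param hΩb
    have : Continuous fun p : ((EuclideanSpace ℝ (Fin n) × ℝ) × ℝ) × EuclideanSpace ℝ (Fin m) =>
        k p.1.1.1 p.2 p.1.1.2 * (ubar p.2 p.1.1.2 + p.1.2) ^ l := by
      have g1 : Continuous fun p : ((EuclideanSpace ℝ (Fin n) × ℝ) × ℝ) × EuclideanSpace ℝ (Fin m) =>
          (p.1.1.1, p.2, p.1.1.2) := by fun_prop
      have g2 : Continuous fun p : ((EuclideanSpace ℝ (Fin n) × ℝ) × ℝ) × EuclideanSpace ℝ (Fin m) =>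
          (p.2, p.1.1.2) := by fun_prop
      have g3 : Continuous fun p : ((EuclideanSpace ℝ (Fin n) × ℝ) × ℝ) × EuclideanSpace ℝ (Fin m) =>
          p.1.2 := by fun_prop
      exact (hk.comp g1).mul (hrpow.comp ((hu.comp g2).add g3))
    exact this
  -- the open set where `G < h`
  set N : Set ((EuclideanSpace ℝ (Fin n) × ℝ) × ℝ) := {q | G q < h q.1.1 q.1.2} with hN
  have hNo : IsOpen N := isOpen_lt hGc (hh.comp (by fun_prop))
  have hS : IsCompact (K ×ˢ Set.Icc (0 : ℝ) T₀) := hK.prod isCompact_Icc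
  have hsub : (K ×ˢ Set.Icc (0 : ℝ) T₀) ×ˢ ({0} : Set ℝ) ⊆ N := by
    rintro ⟨⟨x, t⟩, ε⟩ ⟨⟨hx, ht⟩, hε⟩
    simp only [Set.mem_singleton_iff] at hε
    subst hε
    have : G ((x, t), 0) = ∫ y in Ω, k x y t * ubar y t ^ l := by
      simp [hG]
    simpa [hN, this] using hstrict x hx t ht
  obtain ⟨u, v, hu_o, hv_o, hSu, h0v, huv⟩ :=
    generalized_tube_lemma hS isCompact_singleton hNo hsub
  have h0 : (0 : ℝ) ∈ v := h0v rfl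
  rcases Metric.isOpen_iff.mp hv_o 0 h0 with ⟨r, hr, hball⟩
  refine ⟨r / 2, by linarith, fun x hx t ht => ?_⟩
  have hmem : ((x, t), r / 2) ∈ u ×ˢ v := by
    refine ⟨hSu ⟨hx, ht⟩, hball ?_⟩
    simp only [Metric.mem_ball, Real.dist_eq, sub_zero]
    rw [abs_of_pos (by linarith)]
    linarith
  exact le_of_lt (huv hmem)
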